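/- arXiv:1312.4054 — 2 statements merged into one kernel-verified Lean document; each statement's English description precedes it below -/
import Mathlib

section
/- For every real t > 1/2 and every real μ ≥ 0, the sum over integers m ∈ ℤ of (1+μ+2m²)^{-t} (1 + (1 + (1/2)·log(1+2|m|))²) is bounded by C(t)·(1+μ)^{1/2+ε-t} for any ε > 0 and some constant C(t,ε) depending only on t and ε. -/
set_option maxHeartbeats 1000000

theorem tsum_pow_neg_t_log_bound (t : ℝ) (ht : 1 / 2 < t) (ε : ℝ) (hε : 0 < ε) :
    ∃ C : ℝ, 0 < C ∧ ∀ μ : ℝ, 0 ≤ μ →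
      (∑' m : ℤ, (1 + μ + 2 * (m : ℝ) ^ 2) ^ (-t) *
          (1 + (1 + (1 / 2) * Real.log (1 + 2 * |(m : ℝ)|)) ^ 2)) ≤
        C * (1 + μ) ^ (1 / 2 + ε - t) := by
  obtain ⟨s, hs_half, hst, hsε⟩ : ∃ s : ℝ, 1/2 < s ∧ s ≤ t ∧ s ≤ 1/2 + ε :=
    ⟨min t (1/2 + ε), lt_min ht (by linarith), min_le_left _ _, min_le_right _ _⟩
  set δ : ℝ := (s - 1/2) / 8 with hδdef
  have hδ : 0 < δ := by rw [hδdef]; linarith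
  set r : ℝ := s - 2 * δ with hrdef
  have hr : 1/2 < r := by rw [hrdef, hδdef]; linarith
  set K : ℝ := 3 + (2:ℝ) ^ (2*δ) / (2 * δ^2) with hKdef
  have hK0 : 0 < K := by
    rw [hKdef]
    have : (0:ℝ) < (2:ℝ) ^ (2*δ) / (2 * δ^2) := by positivity
    linarith
  have hbase : ∀ m : ℤ, (1:ℝ) ≤ 1 + 2 * (m:ℝ)^2 := fun m => by nlinarith [sq_nonneg (m:ℝ)]
  have hbpos : ∀ m : ℤ, (0:ℝ) < 1 + 2 * (m:ℝ)^2 := fun m => lt_of_lt_of_le one_pos (hbase m)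
  -- bracket bound
  have hbracket : ∀ m : ℤ,
      1 + (1 + (1/2) * Real.log (1 + 2 * |(m:ℝ)|)) ^ 2 ≤ K * (1 + 2 * (m:ℝ)^2) ^ (2*δ) := by
    intro m
    set y : ℝ := 1 + 2 * (m:ℝ)^2 with hy
    have hy1 : 1 ≤ y := hbase m
    have h1 : 1 + 2*|(m:ℝ)| ≤ 2 * y := by
      have h0 := abs_nonneg (m:ℝ)
      have hsa : |(m:ℝ)|^2 = (m:ℝ)^2 := sq_abs _
      nlinarith [sq_nonneg (|(m:ℝ)| - 1)]
    have hlog1 : Real.log (1 + 2*|(m:ℝ)|) ≤ Real.log (2*y) :=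
      Real.log_le_log (by positivity) h1
    have hlog2 : Real.log (2*y) ≤ (2*y) ^ δ / δ :=
      Real.log_le_rpow_div (by positivity) hδ
    have hlognn : 0 ≤ Real.log (1 + 2*|(m:ℝ)|) :=
      Real.log_nonneg (by have := abs_nonneg (m:ℝ); linarith)
    have hA : 1 + (1/2) * Real.log (1 + 2*|(m:ℝ)|) ≤ 1 + (2*y)^δ / (2*δ) := by
      have h := hlog1.trans hlog2
      have : (1/2) * Real.log (1 + 2*|(m:ℝ)|) ≤ (1/2) * ((2*y)^δ / δ) := by linarith
      have heq : (1/2) * ((2*y)^δ / δ) = (2*y)^δ / (2*δ) := by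
        field_simp
      linarith [heq ▸ this]
    have hApos : 0 ≤ 1 + (1/2) * Real.log (1 + 2*|(m:ℝ)|) := by linarith
    have hsq : (1 + (1/2) * Real.log (1 + 2*|(m:ℝ)|))^2 ≤ (1 + (2*y)^δ / (2*δ))^2 :=
      pow_le_pow_left₀ hApos hA 2
    have h2y : (2*y)^δ = (2:ℝ)^δ * y^δ := Real.mul_rpow (by norm_num) (by positivity)
    have hyδ1 : 1 ≤ y ^ δ := Real.one_le_rpow hy1 hδ.le
    have hy2δ1 : 1 ≤ y ^ (2*δ) := Real.one_le_rpow hy1 (by positivity)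
    have hyδδ : y^δ * y^δ = y^(2*δ) := by
      rw [← Real.rpow_add (by positivity)]; ring_nf
    have h2δδ : (2:ℝ)^δ * (2:ℝ)^δ = (2:ℝ)^(2*δ) := by
      rw [← Real.rpow_add (by norm_num)]; ring_nf
    have h2δpos : (0:ℝ) < (2:ℝ)^δ := Real.rpow_pos_of_pos (by norm_num) _
    have hyδpos : (0:ℝ) < y^δ := Real.rpow_pos_of_pos (by positivity) _
    -- (1+c)^2 ≤ 2 + 2 c^2, c = 2^δ y^δ/(2δ)
    have key : 1 + (1 + (2:ℝ)^δ * y^δ / (2*δ))^2 ≤ K * y^(2*δ) := by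
      rw [hKdef]
      have hc : (0:ℝ) ≤ (2:ℝ)^δ * y^δ / (2*δ) := by positivity
      have hexp : ((2:ℝ)^δ * y^δ / (2*δ))^2 = ((2:ℝ)^(2*δ) / (2*δ^2)) * y^(2*δ) / 2 := by
        field_simp [← h2δδ, ← hyδδ]; rw [← h2δδ, ← hyδδ]; ring
      nlinarith [sq_nonneg ((2:ℝ)^δ * y^δ / (2*δ) - 1),
        mul_le_mul_of_nonneg_left hy2δ1 (le_of_lt (by positivity : (0:ℝ) < (2:ℝ)^(2*δ) / (2*δ^2)))]
    calc 1 + (1 + (1/2) * Real.log (1 + 2*|(m:ℝ)|))^2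
        ≤ 1 + (1 + (2*y)^δ / (2*δ))^2 := by linarith
      _ = 1 + (1 + (2:ℝ)^δ * y^δ / (2*δ))^2 := by rw [h2y]
      _ ≤ K * y^(2*δ) := key
  -- summability of the μ-free majorant
  have hFnn : ∀ m : ℤ, 0 ≤ (1 + 2*(m:ℝ)^2) ^ (-s) *
      (1 + (1 + (1/2) * Real.log (1 + 2*|(m:ℝ)|))^2) := by
    intro m
    have := hbpos m
    positivity
  have hFsum : Summable (fun m : ℤ => (1 + 2*(m:ℝ)^2) ^ (-s) *
      (1 + (1 + (1/2) * Real.log (1 + 2*|(m:ℝ)|))^2)) := by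
    have h2r : 1 < 2 * r := by linarith
    have hind : Summable (fun m : ℤ => if m = 0 then (1:ℝ) else 0) := by
      apply summable_of_ne_finset_zero (s := {(0:ℤ)})
      intro b hb
      simp only [Finset.mem_singleton] at hb
      simp [hb]
    have hgsum : Summable (fun m : ℤ =>
        K * (|(m:ℝ)| ^ (-(2*r)) + if m = 0 then (1:ℝ) else 0)) :=
      ((Real.summable_abs_int_rpow h2r).add hind).mul_left K
    refine hgsum.of_nonneg_of_le hFnn ?_
    intro m
    have hb1 := hbase m
    have hbp := hbpos m
    have step1 : (1 + 2*(m:ℝ)^2) ^ (-s) *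
        (1 + (1 + (1/2) * Real.log (1 + 2*|(m:ℝ)|))^2)
        ≤ (1 + 2*(m:ℝ)^2) ^ (-s) * (K * (1 + 2*(m:ℝ)^2) ^ (2*δ)) :=
      mul_le_mul_of_nonneg_left (hbracket m) (by positivity)
    have step2 : (1 + 2*(m:ℝ)^2) ^ (-s) * (K * (1 + 2*(m:ℝ)^2) ^ (2*δ))
        = K * (1 + 2*(m:ℝ)^2) ^ (-r) := by
      rw [mul_comm, mul_assoc, ← Real.rpow_add hbp]
      congr 1
      rw [hrdef]; ring_nf
    rw [step2] at step1
    refine step1.trans ?_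
    refine mul_le_mul_of_nonneg_left ?_ hK0.le
    rcases eq_or_ne m 0 with hm | hm
    · subst hm
      simp only [Int.cast_zero, abs_zero, reduceIte]
      rw [Real.zero_rpow (ne_of_lt (by linarith : -(2*r) < 0)),
        show (1:ℝ) + 2 * (0:ℝ)^2 = 1 by norm_num, Real.one_rpow]
      norm_num
    · have hm0 : (0:ℝ) < |(m:ℝ)| := by
        simp only [abs_pos, ne_eq, Int.cast_eq_zero]; exact hm
      have hm1 : (1:ℝ) ≤ |(m:ℝ)| := by
        have : (1:ℤ) ≤ |m| := Int.one_le_abs (by exact_mod_cast hm)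
        calc (1:ℝ) ≤ (|m| : ℤ) := by exact_mod_cast this
          _ = |(m:ℝ)| := by push_cast; ring
      have hmsq : |(m:ℝ)|^2 ≤ 1 + 2*(m:ℝ)^2 := by
        have := sq_abs (m:ℝ)
        nlinarith [sq_nonneg (m:ℝ)]
      have h1 : |(m:ℝ)| ^ ((2:ℝ)) ≤ 1 + 2*(m:ℝ)^2 := by
        rw [show ((2:ℝ)) = ((2:ℕ):ℝ) by norm_num, Real.rpow_natCast]
        exact_mod_cast hmsq
      have h2 : (|(m:ℝ)| ^ ((2:ℝ))) ^ r ≤ (1 + 2*(m:ℝ)^2) ^ r :=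
        Real.rpow_le_rpow (by positivity) h1 (by linarith)
      have h3 : (1 + 2*(m:ℝ)^2) ^ (-r) ≤ (|(m:ℝ)| ^ ((2:ℝ))) ^ (-r) := by
        rw [Real.rpow_neg hbp.le, Real.rpow_neg (by positivity)]
        exact inv_anti₀ (Real.rpow_pos_of_pos (Real.rpow_pos_of_pos hm0 _) _) h2
      rw [← Real.rpow_mul (abs_nonneg _)] at h3
      rw [if_neg hm, add_zero]
      refine h3.trans_eq ?_
      congr 1
      ring
  have htsnn : 0 ≤ ∑' m : ℤ, (1 + 2*(m:ℝ)^2) ^ (-s) *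
      (1 + (1 + (1/2) * Real.log (1 + 2*|(m:ℝ)|))^2) := tsum_nonneg hFnn
  refine ⟨(∑' m : ℤ, (1 + 2*(m:ℝ)^2) ^ (-s) *
      (1 + (1 + (1/2) * Real.log (1 + 2*|(m:ℝ)|))^2)) + 1, by linarith, fun μ hμ => ?_⟩
  have ha1 : (1:ℝ) ≤ 1 + μ := by linarith
  -- termwise bound
  have hterm : ∀ m : ℤ, (1 + μ + 2*(m:ℝ)^2) ^ (-t) *
      (1 + (1 + (1/2) * Real.log (1 + 2*|(m:ℝ)|))^2)
      ≤ (1+μ)^(s-t) * ((1 + 2*(m:ℝ)^2) ^ (-s) *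
        (1 + (1 + (1/2) * Real.log (1 + 2*|(m:ℝ)|))^2)) := by
    intro m
    have hb1 := hbase m
    have hbp := hbpos m
    have hc : (0:ℝ) < 1 + μ + 2*(m:ℝ)^2 := by nlinarith [sq_nonneg (m:ℝ)]
    have hac : 1 + μ ≤ 1 + μ + 2*(m:ℝ)^2 := by nlinarith [sq_nonneg (m:ℝ)]
    have hbc : 1 + 2*(m:ℝ)^2 ≤ 1 + μ + 2*(m:ℝ)^2 := by linarith
    have h1 : (1+μ)^(t-s) ≤ (1+μ+2*(m:ℝ)^2)^(t-s) :=
      Real.rpow_le_rpow (by linarith) hac (by linarith)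
    have h2 : (1+2*(m:ℝ)^2)^s ≤ (1+μ+2*(m:ℝ)^2)^s :=
      Real.rpow_le_rpow (by positivity) hbc (by linarith)
    have h3 : (1+μ)^(t-s) * (1+2*(m:ℝ)^2)^s ≤ (1+μ+2*(m:ℝ)^2)^t := by
      calc (1+μ)^(t-s) * (1+2*(m:ℝ)^2)^s
          ≤ (1+μ+2*(m:ℝ)^2)^(t-s) * (1+μ+2*(m:ℝ)^2)^s := by
            apply mul_le_mul h1 h2 (by positivity) (by positivity)
        _ = (1+μ+2*(m:ℝ)^2)^t := by rw [← Real.rpow_add hc]; ring_nf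
    have hmain : (1+μ+2*(m:ℝ)^2)^(-t) ≤ (1+μ)^(s-t) * (1+2*(m:ℝ)^2)^(-s) := by
      have e1 : (1+μ)^(s-t) * (1+2*(m:ℝ)^2)^(-s)
          = ((1+μ)^(t-s) * (1+2*(m:ℝ)^2)^s)⁻¹ := by
        rw [mul_inv, ← Real.rpow_neg (by linarith), ← Real.rpow_neg (by positivity), neg_sub]
      rw [Real.rpow_neg hc.le, e1]
      exact inv_anti₀ (by positivity) h3
    have hBnn : 0 ≤ 1 + (1 + (1/2) * Real.log (1 + 2*|(m:ℝ)|))^2 := by positivity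
    calc (1 + μ + 2*(m:ℝ)^2) ^ (-t) * (1 + (1 + (1/2) * Real.log (1 + 2*|(m:ℝ)|))^2)
        ≤ ((1+μ)^(s-t) * (1 + 2*(m:ℝ)^2) ^ (-s)) *
          (1 + (1 + (1/2) * Real.log (1 + 2*|(m:ℝ)|))^2) :=
          mul_le_mul_of_nonneg_right hmain hBnn
      _ = (1+μ)^(s-t) * ((1 + 2*(m:ℝ)^2) ^ (-s) *
          (1 + (1 + (1/2) * Real.log (1 + 2*|(m:ℝ)|))^2)) := by ring
  have hRsum : Summable (fun m : ℤ => (1+μ)^(s-t) * ((1 + 2*(m:ℝ)^2) ^ (-s) *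
      (1 + (1 + (1/2) * Real.log (1 + 2*|(m:ℝ)|))^2))) := hFsum.mul_left _
  have hLsum : Summable (fun m : ℤ => (1 + μ + 2*(m:ℝ)^2) ^ (-t) *
      (1 + (1 + (1/2) * Real.log (1 + 2*|(m:ℝ)|))^2)) := by
    refine hRsum.of_nonneg_of_le (fun m => ?_) hterm
    have : (0:ℝ) < 1 + μ + 2*(m:ℝ)^2 := by nlinarith [sq_nonneg (m:ℝ)]
    positivity
  have hrpow_le : (1+μ)^(s-t) ≤ (1+μ)^(1/2+ε-t) :=
    Real.rpow_le_rpow_of_exponent_le ha1 (by linarith)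
  have hrpow_nn : (0:ℝ) ≤ (1+μ)^(1/2+ε-t) := Real.rpow_nonneg (by linarith) _
  calc (∑' m : ℤ, (1 + μ + 2*(m:ℝ)^2) ^ (-t) *
        (1 + (1 + (1/2) * Real.log (1 + 2*|(m:ℝ)|))^2))
      ≤ ∑' m : ℤ, (1+μ)^(s-t) * ((1 + 2*(m:ℝ)^2) ^ (-s) *
        (1 + (1 + (1/2) * Real.log (1 + 2*|(m:ℝ)|))^2)) :=
        Summable.tsum_le_tsum hterm hLsum hRsum
    _ = (1+μ)^(s-t) * ∑' m : ℤ, (1 + 2*(m:ℝ)^2) ^ (-s) *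
        (1 + (1 + (1/2) * Real.log (1 + 2*|(m:ℝ)|))^2) := tsum_mul_left
    _ ≤ ((∑' m : ℤ, (1 + 2*(m:ℝ)^2) ^ (-s) *
        (1 + (1 + (1/2) * Real.log (1 + 2*|(m:ℝ)|))^2)) + 1) * (1+μ)^(1/2+ε-t) := by
        have h1 : (1+μ)^(s-t) * (∑' m : ℤ, (1 + 2*(m:ℝ)^2) ^ (-s) *
            (1 + (1 + (1/2) * Real.log (1 + 2*|(m:ℝ)|))^2))
            ≤ (1+μ)^(1/2+ε-t) * (∑' m : ℤ, (1 + 2*(m:ℝ)^2) ^ (-s) *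
            (1 + (1 + (1/2) * Real.log (1 + 2*|(m:ℝ)|))^2)) :=
          mul_le_mul_of_nonneg_right hrpow_le htsnn
        nlinarith [hrpow_nn, htsnn, h1]
end

section
/- For ν ∈ (0,1) and m ≥ 1, the product ∏_{i=1}^{m} (2i-1-ν)/(2i-1+ν) is bounded above by C·(1+m)^{-ν} for a constant C depending only on an upper bound ν₀ < 1 for ν (uniformly for ν ∈ (0, ν₀]). -/
private lemma telescope (m : ℕ) :
    (∏ i ∈ Finset.Icc 1 m, (2 * (i : ℝ) - 1) / (2 * (i : ℝ) + 1)) = 1 / (2 * m + 1) := by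
  induction m with
  | zero => simp
  | succ n ih =>
      rw [Finset.prod_Icc_succ_top (Nat.le_add_left 1 n), ih]
      have h1 : (2 * (n : ℝ) + 1) ≠ 0 := by positivity
      have h2 : (2 * ((n : ℝ) + 1) + 1) ≠ 0 := by positivity
      push_cast
      rw [div_mul_div_comm, div_eq_div_iff (by positivity) (by positivity)]
      ring

theorem complementary_series_product_bound
    (ν₀ : ℝ) (h0 : 0 < ν₀) (h1 : ν₀ < 1) :
    ∃ C : ℝ, 0 < C ∧ ∀ ν : ℝ, 0 < ν → ν ≤ ν₀ → ∀ m : ℕ, 1 ≤ m →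
      (∏ i ∈ Finset.Icc 1 m, (2 * (i : ℝ) - 1 - ν) / (2 * (i : ℝ) - 1 + ν)) ≤
        C * (1 + (m : ℝ)) ^ (-ν) := by
  refine ⟨1, one_pos, ?_⟩
  intro ν hν hν0 m hm
  have hν1 : ν < 1 := lt_of_le_of_lt hν0 h1
  -- pointwise bound
  have key : ∀ i ∈ Finset.Icc 1 m,
      (2 * (i : ℝ) - 1 - ν) / (2 * (i : ℝ) - 1 + ν) ≤
        ((2 * (i : ℝ) - 1) / (2 * (i : ℝ) + 1)) ^ ν := by
    intro i hi
    have hi1 : (1 : ℕ) ≤ i := (Finset.mem_Icc.mp hi).1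
    have hi1' : (1 : ℝ) ≤ (i : ℝ) := by exact_mod_cast hi1
    set a : ℝ := 2 * (i : ℝ) - 1 with ha
    have haa : 1 ≤ a := by simp only [ha]; linarith
    have hapos : 0 < a := by linarith
    have ha2 : 2 * (i : ℝ) + 1 = a + 2 := by ring
    rw [ha2]
    -- step 1: (a - ν)/(a + ν) ≤ a/(a + 2ν)
    have step1 : (a - ν) / (a + ν) ≤ a / (a + 2 * ν) := by
      rw [div_le_div_iff₀ (by linarith) (by linarith)]
      nlinarith [sq_nonneg ν]
    -- step 2 (Bernoulli): ((a+2)/a)^ν ≤ 1 + ν * (2/a) = (a + 2ν)/a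
    have hb : ((a + 2) / a) ^ ν ≤ (a + 2 * ν) / a := by
      have h2a : (0:ℝ) ≤ 2 / a := by positivity
      have := rpow_one_add_le_one_add_mul_self (s := 2 / a) (by linarith) hν.le hν1.le
      have e1 : (1 : ℝ) + 2 / a = (a + 2) / a := by field_simp
      have e2 : (1 : ℝ) + ν * (2 / a) = (a + 2 * ν) / a := by field_simp
      rwa [e1, e2] at this
    -- step 3: invert to get a/(a+2ν) ≤ (a/(a+2))^ν
    have hpos1 : (0:ℝ) < (a + 2) / a := by positivity
    have hpos2 : (0:ℝ) < ((a + 2) / a) ^ ν := Real.rpow_pos_of_pos hpos1 ν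
    have step2 : a / (a + 2 * ν) ≤ (a / (a + 2)) ^ ν := by
      have hinv : (a / (a + 2)) ^ ν = (((a + 2) / a) ^ ν)⁻¹ := by
        rw [← Real.inv_rpow hpos1.le, inv_div]
      rw [hinv]
      rw [le_inv_comm₀ (by positivity) hpos2]
      calc ((a + 2) / a) ^ ν ≤ (a + 2 * ν) / a := hb
        _ = (a / (a + 2 * ν))⁻¹ := by rw [inv_div]
    exact step1.trans step2
  have hnonneg : ∀ i ∈ Finset.Icc 1 m,
      0 ≤ (2 * (i : ℝ) - 1 - ν) / (2 * (i : ℝ) - 1 + ν) := by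
    intro i hi
    have hi1 : (1 : ℕ) ≤ i := (Finset.mem_Icc.mp hi).1
    have hi1' : (1 : ℝ) ≤ (i : ℝ) := by exact_mod_cast hi1
    apply div_nonneg <;> linarith
  calc (∏ i ∈ Finset.Icc 1 m, (2 * (i : ℝ) - 1 - ν) / (2 * (i : ℝ) - 1 + ν))
      ≤ ∏ i ∈ Finset.Icc 1 m, ((2 * (i : ℝ) - 1) / (2 * (i : ℝ) + 1)) ^ ν :=
        Finset.prod_le_prod hnonneg key
    _ = (∏ i ∈ Finset.Icc 1 m, (2 * (i : ℝ) - 1) / (2 * (i : ℝ) + 1)) ^ ν := by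
        rw [← Real.finset_prod_rpow]
        intro i hi
        have hi1' : (1 : ℝ) ≤ (i : ℝ) := by
          exact_mod_cast (Finset.mem_Icc.mp hi).1
        apply div_nonneg <;> linarith
    _ = (1 / (2 * (m : ℝ) + 1)) ^ ν := by rw [telescope]
    _ ≤ (1 / (1 + (m : ℝ))) ^ ν := by
        apply Real.rpow_le_rpow (by positivity) _ hν.le
        apply div_le_div_of_nonneg_left one_pos.le (by positivity)
        have : (1:ℝ) ≤ (m:ℝ) := by exact_mod_cast hm
        linarith
    _ = 1 * (1 + (m : ℝ)) ^ (-ν) := by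
        rw [one_mul, one_div, Real.inv_rpow (by positivity),
          ← Real.rpow_neg (by positivity)]
end
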